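/- arXiv:2002.09379 — 7 statements merged into one kernel-verified Lean document; each statement's English description precedes it below -/
import Mathlib

section
/- Let A be a commutative ring and g : M → N a morphism of A-modules where M is finitely generated and N is finite projective. If for every maximal ideal 𝔪 of A, the induced map M ⊗_A A/𝔪 → N ⊗_A A/𝔪 is an isomorphism, then g is an isomorphism. -/
open TensorProduct

/-- Nakayama: a f.g. module whose fibers at all maximal ideals vanish is trivial. -/
lemma aux_subsingleton {A P : Type*} [CommRing A] [AddCommGroup P] [Module A P]
    [Module.Finite A P]
    (h : ∀ 𝔪 : Ideal A, 𝔪.IsMaximal → Subsingleton ((A ⧸ 𝔪) ⊗[A] P)) :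
    Subsingleton P := by
  by_contra hs
  have : Nontrivial P := not_subsingleton_iff_nontrivial.mp hs
  have hann : Module.annihilator A P ≠ ⊤ := by
    intro he
    have h1 : (1 : A) ∈ Module.annihilator A P := he ▸ Submodule.mem_top
    rw [Module.mem_annihilator] at h1
    exact hs ⟨fun a b => by simpa using (h1 a).trans (h1 b).symm⟩
  obtain ⟨𝔪, h𝔪, hle⟩ := Ideal.exists_le_maximal _ hann
  have hquot : Subsingleton (P ⧸ (𝔪 • ⊤ : Submodule A P)) := by
    have := h 𝔪 h𝔪
    exact (quotTensorEquivQuotSMul P 𝔪).symm.toEquiv.subsingleton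
  have htop : (𝔪 • ⊤ : Submodule A P) = ⊤ :=
    Submodule.Quotient.subsingleton_iff.mp hquot
  obtain ⟨r, hr1, hr0⟩ := Submodule.exists_sub_one_mem_and_smul_eq_zero_of_fg_of_le_smul
    𝔪 ⊤ Module.Finite.fg_top htop.ge
  have hrmem : r ∈ 𝔪 := hle (Module.mem_annihilator.mpr fun m => hr0 m Submodule.mem_top)
  exact h𝔪.ne_top (Ideal.eq_top_of_isUnit_mem _ (by simpa using 𝔪.sub_mem hrmem hr1) isUnit_one)

/-- If `g : M → N` is a map of `A`-modules with `M` finitely generated and `N` finite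
projective, and `g ⊗ A/𝔪` is an isomorphism for every maximal ideal `𝔪`, then `g` is an
isomorphism. -/
theorem stmt_0 {A : Type*} [CommRing A] {M N : Type*}
    [AddCommGroup M] [Module A M] [AddCommGroup N] [Module A N]
    [Module.Finite A M] [Module.Finite A N] [Module.Projective A N]
    (g : M →ₗ[A] N)
    (h : ∀ 𝔪 : Ideal A, 𝔪.IsMaximal →
      Function.Bijective (LinearMap.baseChange (A ⧸ 𝔪) g)) :
    Function.Bijective g := by
  -- Surjectivity: the cokernel has trivial fibers, hence is trivial.
  have hsurj : Function.Surjective g := by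
    set Q := N ⧸ LinearMap.range g
    have hQ : Subsingleton Q := by
      refine aux_subsingleton (A := A) (fun 𝔪 h𝔪 => ?_)
      have hsur : Function.Surjective
          (LinearMap.baseChange (A ⧸ 𝔪) (LinearMap.range g).mkQ) :=
        LinearMap.lTensor_surjective _ (Submodule.mkQ_surjective _)
      refine ⟨fun a b => ?_⟩
      obtain ⟨x, rfl⟩ := hsur a
      obtain ⟨y, rfl⟩ := (h 𝔪 h𝔪).2 x
      obtain ⟨x', rfl⟩ := hsur b
      obtain ⟨y', rfl⟩ := (h 𝔪 h𝔪).2 x'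
      rw [← LinearMap.comp_apply, ← LinearMap.baseChange_comp, ← LinearMap.comp_apply,
        ← LinearMap.baseChange_comp]
      have : (LinearMap.range g).mkQ.comp g = 0 := by
        ext m; simp [Submodule.Quotient.mk_eq_zero]
      rw [this]
      simp
    rw [← LinearMap.range_eq_top]
    exact Submodule.Quotient.subsingleton_iff.mp hQ
  -- Injectivity: the surjection splits since `N` is projective.
  obtain ⟨s, hs⟩ := Module.projective_lifting_property g (LinearMap.id) hsurj
  -- `ker g` is a direct summand of `M`, hence finitely generated.
  set K := LinearMap.ker g
  have hπ : ∀ m : M, m - s (g m) ∈ K := by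
    intro m
    simp only [K, LinearMap.mem_ker, map_sub]
    rw [← LinearMap.comp_apply g s, hs]
    simp
  let ρ : M →ₗ[A] K := LinearMap.codRestrict K (LinearMap.id - s ∘ₗ g) (fun m => hπ m)
  have hρ : ρ ∘ₗ K.subtype = LinearMap.id := by
    ext ⟨k, hk⟩
    have : g k = 0 := hk
    simp [ρ, this]
  have hKfin : Module.Finite A K := by
    constructor
    have : (⊤ : Submodule A K) = Submodule.map ρ ⊤ := by
      rw [eq_comm, Submodule.eq_top_iff']
      intro k
      exact ⟨k, Submodule.mem_top, by simpa using LinearMap.ext_iff.mp hρ k⟩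
    rw [this]
    exact (Module.Finite.fg_top (R := A) (M := M)).map ρ
  have hK : Subsingleton K := by
    refine aux_subsingleton (A := A) (fun 𝔪 h𝔪 => ?_)
    -- base change of the inclusion is injective (it is split) and has image in ker of an injection
    have hinj : Function.Injective (LinearMap.baseChange (A ⧸ 𝔪) K.subtype) := by
      have : (LinearMap.baseChange (A ⧸ 𝔪) ρ).comp
          (LinearMap.baseChange (A ⧸ 𝔪) K.subtype) = LinearMap.id := by
        rw [← LinearMap.baseChange_comp, hρ, LinearMap.baseChange_id]
      exact Function.LeftInverse.injective (g := (LinearMap.baseChange (A ⧸ 𝔪) ρ))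
        fun x => by simpa using LinearMap.ext_iff.mp this x
    have hzero : (LinearMap.baseChange (A ⧸ 𝔪) g).comp
        (LinearMap.baseChange (A ⧸ 𝔪) K.subtype) = 0 := by
      rw [← LinearMap.baseChange_comp]
      have : g ∘ₗ K.subtype = 0 := by ext ⟨k, hk⟩; exact hk
      rw [this, LinearMap.baseChange_zero]
    refine ⟨fun a b => hinj ((h 𝔪 h𝔪).1 ?_)⟩
    have ha := congrFun (congrArg DFunLike.coe hzero) a
    have hb := congrFun (congrArg DFunLike.coe hzero) b
    simp only [LinearMap.comp_apply, LinearMap.zero_apply] at ha hb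
    rw [ha, hb]
  have : K = ⊥ := Submodule.eq_bot_of_subsingleton
  exact ⟨LinearMap.ker_eq_bot.mp this, hsurj⟩
end

section
/- Let A be a commutative ring and M' →^φ M →^ψ M' →^φ M a sequence of finite projective A-modules with φ∘ψ = 0 and ψ∘φ = 0. If for every maximal ideal 𝔪 the sequence tensored with the residue field κ(𝔪) is exact, then the original sequence M' →^φ M →^ψ M' →^φ M is exact. -/
open TensorProduct

/-- Over a field, an exact pair `Φ, Ψ` admits a splitting homotopy at the middle spot. -/
lemma field_split {κ : Type*} [Field κ] {V V' : Type*}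
    [AddCommGroup V] [Module κ V] [AddCommGroup V'] [Module κ V']
    (Φ : V' →ₗ[κ] V) (Ψ : V →ₗ[κ] V') (hex : Function.Exact Φ Ψ) :
    ∃ (H₁ : V →ₗ[κ] V') (H₂ : V' →ₗ[κ] V), ∀ v, Φ (H₁ v) + H₂ (Ψ v) = v := by
  have hP : LinearMap.ker Ψ = LinearMap.range Φ := LinearMap.exact_iff.mp hex
  set P := LinearMap.ker Ψ with hPdef
  obtain ⟨Q, hQ⟩ := P.exists_isCompl
  -- section of Φ onto its range
  obtain ⟨s, hs⟩ := Module.projective_lifting_property (R := κ) Φ.rangeRestrict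
    (LinearMap.id : LinearMap.range Φ →ₗ[κ] LinearMap.range Φ)
    (LinearMap.surjective_rangeRestrict Φ)
  -- left inverse of Ψ restricted to Q
  have hinj : LinearMap.ker (Ψ ∘ₗ Q.subtype) = ⊥ := by
    ext q
    simp only [LinearMap.mem_ker, LinearMap.comp_apply, Submodule.subtype_apply,
      Submodule.mem_bot]
    constructor
    · intro hq
      have : (q : V) ∈ P ⊓ Q := ⟨hq, q.2⟩
      rw [hQ.inf_eq_bot] at this
      exact Subtype.ext this
    · intro hq; simp [hq]
  obtain ⟨g, hg⟩ := (Ψ ∘ₗ Q.subtype).exists_leftInverse_of_injective hinj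
  refine ⟨s ∘ₗ Submodule.inclusion (le_of_eq hP) ∘ₗ P.projectionOnto Q hQ,
    Q.subtype ∘ₗ g, fun v => ?_⟩
  have h1 : Φ ((s ∘ₗ Submodule.inclusion (le_of_eq hP) ∘ₗ P.projectionOnto Q hQ) v)
      = (P.projectionOnto Q hQ v : V) := by
    have := congrArg (fun f => f (Submodule.inclusion (le_of_eq hP)
      (P.projectionOnto Q hQ v))) hs
    simpa [LinearMap.rangeRestrict, Subtype.ext_iff] using congrArg Subtype.val this
  have h2 : (Q.subtype ∘ₗ g) (Ψ v) = (Q.projectionOnto P hQ.symm v : V) := by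
    have hv : Ψ v = (Ψ ∘ₗ Q.subtype) (Q.projectionOnto P hQ.symm v) := by
      conv_lhs => rw [← (by simpa only [Submodule.projection_apply] using Submodule.projection_add_projection_eq_self hQ v : ((P.projectionOnto Q hQ v : V) + (Q.projectionOnto P hQ.symm v : V)) = v)]
      have hker : Ψ (P.projection Q hQ v) = 0 :=
        (P.projectionOnto Q hQ v).2
      simp [map_add, hker]
    rw [hv]
    have := congrArg (fun f => f (Q.projectionOnto P hQ.symm v)) hg
    simp only [LinearMap.comp_apply, LinearMap.id_apply] at this ⊢
    rw [this]
    rfl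
  rw [h1, h2, (by simpa only [Submodule.projection_apply] using Submodule.projection_add_projection_eq_self hQ v : ((P.projectionOnto Q hQ v : V) + (Q.projectionOnto P hQ.symm v : V)) = v)]

/-- Lift a map into `(A ⧸ I) ⊗ N` along `N → (A ⧸ I) ⊗ N` using projectivity. -/
lemma lift_exists {A : Type*} [CommRing A] {M N : Type*}
    [AddCommGroup M] [Module A M] [Module.Projective A M]
    [AddCommGroup N] [Module A N] (I : Ideal A)
    (g : M →ₗ[A] ((A ⧸ I) ⊗[A] N)) :
    ∃ g' : M →ₗ[A] N, ∀ m, (1 : A ⧸ I) ⊗ₜ[A] g' m = g m := by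
  have hsurj : Function.Surjective (TensorProduct.mk A (A ⧸ I) N 1) := by
    have : (TensorProduct.mk A (A ⧸ I) N 1) =
        (TensorProduct.quotTensorEquivQuotSMul N I).symm.toLinearMap ∘ₗ
          Submodule.mkQ (I • ⊤) := (TensorProduct.quotTensorEquivQuotSMul_symm_comp_mkQ I).symm
    rw [this]
    exact (TensorProduct.quotTensorEquivQuotSMul N I).symm.surjective.comp
      (Submodule.mkQ_surjective _)
  obtain ⟨g', hg'⟩ := Module.projective_lifting_property (TensorProduct.mk A (A ⧸ I) N 1) g hsurj
  exact ⟨g', fun m => congrArg (fun f => f m) hg'⟩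

lemma mem_smul_top_of_tmul_eq_zero {A : Type*} [CommRing A] {M : Type*}
    [AddCommGroup M] [Module A M] (I : Ideal A) {x : M}
    (hx : (1 : A ⧸ I) ⊗ₜ[A] x = (0 : (A ⧸ I) ⊗[A] M)) :
    x ∈ (I • ⊤ : Submodule A M) := by
  have := congrArg (TensorProduct.quotTensorEquivQuotSMul M I) hx
  have h1 : (1 : A ⧸ I) = Ideal.Quotient.mk I 1 := rfl
  rw [h1, TensorProduct.quotTensorEquivQuotSMul_mk_tmul, map_zero, one_smul,
    Submodule.Quotient.mk_eq_zero] at this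
  exact this

theorem aux_exact {A : Type*} [CommRing A] {M' M : Type*}
    [AddCommGroup M'] [Module A M'] [AddCommGroup M] [Module A M]
    [Module.Projective A M'] [Module.Finite A M] [Module.Projective A M]
    (φ : M' →ₗ[A] M) (ψ : M →ₗ[A] M') (hψφ : ψ ∘ₗ φ = 0)
    (h : ∀ 𝔪 : Ideal A, 𝔪.IsMaximal →
      Function.Exact (LinearMap.baseChange (A ⧸ 𝔪) φ) (LinearMap.baseChange (A ⧸ 𝔪) ψ)) :
    Function.Exact φ ψ := by
  refine LinearMap.exact_of_comp_of_mem_range ?_ ?_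
  · ext y; exact congrArg (fun f => f y) hψφ
  intro x hx
  -- the ideal of elements `a` with `a • x ∈ range φ`
  set J : Ideal A := Submodule.comap (LinearMap.toSpanSingleton A M x) (LinearMap.range φ)
    with hJdef
  have hmemJ : ∀ a : A, a ∈ J ↔ a • x ∈ LinearMap.range φ := fun a => Iff.rfl
  have hJtop : J = ⊤ := by
    by_contra hJ
    obtain ⟨𝔪, hmax, hle⟩ := Ideal.exists_le_maximal J hJ
    haveI := hmax
    letI : Field (A ⧸ 𝔪) := Ideal.Quotient.field 𝔪
    letI : Algebra A (A ⧸ 𝔪) := Ideal.Quotient.algebra A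
    -- splitting over the residue field
    obtain ⟨H₁, H₂, hH⟩ := field_split (LinearMap.baseChange (A ⧸ 𝔪) φ)
      (LinearMap.baseChange (A ⧸ 𝔪) ψ) (h 𝔪 hmax)
    -- lift the homotopies
    obtain ⟨h₁, hh₁⟩ := lift_exists (M := M) (N := M') 𝔪
      ((H₁.restrictScalars A) ∘ₗ ((TensorProduct.mk A (A ⧸ 𝔪) M) 1))
    obtain ⟨h₂, hh₂⟩ := lift_exists (M := M') (N := M) 𝔪
      ((H₂.restrictScalars A) ∘ₗ ((TensorProduct.mk A (A ⧸ 𝔪) M') 1))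
    set e : Module.End A M := φ ∘ₗ h₁ + h₂ ∘ₗ ψ with hedef
    set f : Module.End A M := LinearMap.id - e with hfdef
    have hrange : LinearMap.range f ≤ (𝔪 • ⊤ : Submodule A M) := by
      rintro _ ⟨m, rfl⟩
      apply mem_smul_top_of_tmul_eq_zero 𝔪
      have hcomp : (1 : (A ⧸ 𝔪)) ⊗ₜ[A] (e m) = (1 : (A ⧸ 𝔪)) ⊗ₜ[A] m := by
        have e1 : (1 : (A ⧸ 𝔪)) ⊗ₜ[A] (φ (h₁ m)) =
            LinearMap.baseChange (A ⧸ 𝔪) φ ((1 : (A ⧸ 𝔪)) ⊗ₜ[A] (h₁ m)) := by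
          simp [LinearMap.baseChange_tmul]
        have e2 : (1 : (A ⧸ 𝔪)) ⊗ₜ[A] (h₂ (ψ m)) =
            H₂ ((1 : (A ⧸ 𝔪)) ⊗ₜ[A] (ψ m)) := by
          simpa using hh₂ (ψ m)
        have e3 : (1 : (A ⧸ 𝔪)) ⊗ₜ[A] (ψ m) =
            LinearMap.baseChange (A ⧸ 𝔪) ψ ((1 : (A ⧸ 𝔪)) ⊗ₜ[A] m) := by
          simp [LinearMap.baseChange_tmul]
        have e4 : (1 : (A ⧸ 𝔪)) ⊗ₜ[A] (h₁ m) = H₁ ((1 : (A ⧸ 𝔪)) ⊗ₜ[A] m) := by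
          simpa using hh₁ m
        calc (1 : (A ⧸ 𝔪)) ⊗ₜ[A] (e m)
            = (1 : (A ⧸ 𝔪)) ⊗ₜ[A] (φ (h₁ m)) + (1 : (A ⧸ 𝔪)) ⊗ₜ[A] (h₂ (ψ m)) := by
              simp [hedef, TensorProduct.tmul_add]
          _ = LinearMap.baseChange (A ⧸ 𝔪) φ (H₁ ((1 : (A ⧸ 𝔪)) ⊗ₜ[A] m)) +
              H₂ (LinearMap.baseChange (A ⧸ 𝔪) ψ ((1 : (A ⧸ 𝔪)) ⊗ₜ[A] m)) := by
              rw [e1, e4, e2, e3]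
          _ = (1 : (A ⧸ 𝔪)) ⊗ₜ[A] m := hH _
      have : (1 : (A ⧸ 𝔪)) ⊗ₜ[A] (f m) = 0 := by
        have : (1 : (A ⧸ 𝔪)) ⊗ₜ[A] (m - e m) = (1 : (A ⧸ 𝔪)) ⊗ₜ[A] m - (1 : (A ⧸ 𝔪)) ⊗ₜ[A] (e m) := by
          rw [TensorProduct.tmul_sub]
        simp only [hfdef, LinearMap.sub_apply, LinearMap.id_apply]
        rw [this, hcomp, sub_self]
      exact this
    obtain ⟨p, hmonic, -, hcoeff, haeval⟩ :=
      LinearMap.exists_monic_and_coeff_mem_pow_and_aeval_eq_zero_of_range_le_smul A f 𝔪 hrange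
    -- f preserves range φ
    have hfrange : ∀ y ∈ LinearMap.range φ, f y ∈ LinearMap.range φ := by
      rintro _ ⟨z, rfl⟩
      have hψz : ψ (φ z) = 0 := congrArg (fun f => f z) hψφ
      refine ⟨z - h₁ (φ z), ?_⟩
      simp [hfdef, hedef, hψz, map_sub]
    -- iterates of f fix x mod range φ
    have hiter : ∀ i : ℕ, (f ^ i) x - x ∈ LinearMap.range φ := by
      intro i
      induction i with
      | zero => simp
      | succ i ih =>
        have hx0 : ψ x = 0 := hx
        have hfx : f x - x ∈ LinearMap.range φ := by
          have : f x - x = -(φ (h₁ x)) := by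
            simp [hfdef, hedef, hx0]
          rw [this]
          exact neg_mem ⟨h₁ x, rfl⟩
        have : (f ^ (i + 1)) x - x = f ((f ^ i) x - x) + (f x - x) := by
          rw [pow_succ']
          simp only [Module.End.mul_apply, map_sub]
          abel
        rw [this]
        exact add_mem (hfrange _ ih) hfx
    -- evaluate the Cayley-Hamilton polynomial at x
    set n := p.natDegree with hn
    have heval : ((Polynomial.aeval f) p) x = 0 := by rw [haeval]; rfl
    have hsum : ((Polynomial.aeval f) p) x =
        ∑ i ∈ Finset.range (n + 1), p.coeff i • ((f ^ i) x) := by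
      rw [Polynomial.aeval_eq_sum_range]
      simp [LinearMap.sum_apply, LinearMap.smul_apply]
      rfl
    set a : A := ∑ i ∈ Finset.range (n + 1), p.coeff i with hadef
    have hax : a • x ∈ LinearMap.range φ := by
      have : a • x = ((Polynomial.aeval f) p) x -
          ∑ i ∈ Finset.range (n + 1), p.coeff i • ((f ^ i) x - x) := by
        rw [hsum, ← Finset.sum_sub_distrib, hadef, Finset.sum_smul]
        apply Finset.sum_congr rfl
        intro i _
        rw [smul_sub]
        abel
      rw [this, heval, zero_sub]
      exact neg_mem (Submodule.sum_mem _ fun i _ => Submodule.smul_mem _ _ (hiter i))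
    have hanotin : a ∉ 𝔪 := by
      intro hain
      have hsplit : a = p.coeff n + ∑ i ∈ Finset.range n, p.coeff i := by
        rw [hadef, Finset.sum_range_succ, add_comm]
      have hmem : ∑ i ∈ Finset.range n, p.coeff i ∈ 𝔪 := by
        apply Submodule.sum_mem
        intro i hi
        have hilt : i < n := Finset.mem_range.mp hi
        have := hcoeff i
        have hpow : 𝔪 ^ (n - i) ≤ 𝔪 := Ideal.pow_le_self (Nat.sub_ne_zero_of_lt hilt)
        exact hpow this
      have h1 : p.coeff n = 1 := hmonic.coeff_natDegree
      have : (1 : A) ∈ 𝔪 := by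
        have : p.coeff n = a - ∑ i ∈ Finset.range n, p.coeff i := by
          rw [hsplit]; ring
        rw [← h1, this]
        exact Ideal.sub_mem _ hain hmem
      exact hmax.ne_top (Ideal.eq_top_of_isUnit_mem _ this isUnit_one)
    exact hanotin (hle ((hmemJ a).mpr hax))
  have : (1 : A) ∈ J := hJtop ▸ Submodule.mem_top
  simpa using (hmemJ 1).mp this

/-- Given a sequence `M' →φ M →ψ M' →φ M` of finite projective `A`-modules with
`φ ∘ ψ = 0` and `ψ ∘ φ = 0`, if the sequence tensored with every residue field
`κ(𝔪) = A/𝔪` at a maximal ideal is exact (at both middle positions), then the original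
sequence is exact. -/
theorem stmt_3 {A : Type*} [CommRing A] {M' M : Type*}
    [AddCommGroup M'] [Module A M'] [AddCommGroup M] [Module A M]
    [Module.Finite A M'] [Module.Projective A M']
    [Module.Finite A M] [Module.Projective A M]
    (φ : M' →ₗ[A] M) (ψ : M →ₗ[A] M')
    (hφψ : φ ∘ₗ ψ = 0) (hψφ : ψ ∘ₗ φ = 0)
    (h : ∀ 𝔪 : Ideal A, 𝔪.IsMaximal →
      Function.Exact (LinearMap.baseChange (A ⧸ 𝔪) φ) (LinearMap.baseChange (A ⧸ 𝔪) ψ) ∧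
      Function.Exact (LinearMap.baseChange (A ⧸ 𝔪) ψ) (LinearMap.baseChange (A ⧸ 𝔪) φ)) :
    Function.Exact φ ψ ∧ Function.Exact ψ φ :=
  ⟨aux_exact φ ψ hψφ (fun 𝔪 hm => (h 𝔪 hm).1),
   aux_exact ψ φ hφψ (fun 𝔪 hm => (h 𝔪 hm).2)⟩
end

section
/- Let A be a commutative ring, M and M' finite projective A-modules, φ : M' → M and ψ : M → M' A-linear maps with φ∘ψ = 0 and ψ∘φ = 0. If the sequence M →^ψ M' →^φ M is exact and coker(φ) is a finite projective A-module, then im(φ) is a direct summand of M, im(ψ) is a direct summand of M', ker(φ) is a direct summand of M', ker(ψ) is a direct summand of M, and coker(ψ) is a finite projective A-module. -/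
private lemma isCompl_ker_range {A E F : Type*} [CommRing A] [AddCommGroup E] [Module A E]
    [AddCommGroup F] [Module A F] (f : E →ₗ[A] F) (g : F →ₗ[A] E)
    (h : f ∘ₗ g = LinearMap.id) : IsCompl (LinearMap.ker f) (LinearMap.range g) := by
  have hfg : ∀ y, f (g y) = y := fun y => congrArg (· y) (congrArg DFunLike.coe h)
  constructor
  · rw [disjoint_iff_inf_le]
    rintro x ⟨hx, y, rfl⟩
    have : y = 0 := by simpa [hfg y] using hx
    simp [this]
  · rw [codisjoint_iff_le_sup]
    intro x _
    have : x - g (f x) ∈ LinearMap.ker f := by simp [hfg]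
    have : x = (x - g (f x)) + g (f x) := by abel
    rw [this]
    exact Submodule.add_mem_sup ‹x - g (f x) ∈ _› ⟨f x, rfl⟩

private lemma proj_of_isCompl {A E : Type*} [CommRing A] [AddCommGroup E] [Module A E]
    [Module.Projective A E] {p q : Submodule A E} (h : IsCompl p q) :
    Module.Projective A p :=
  Module.Projective.of_split p.subtype (p.projectionOnto q h)
    (by ext x; simp)

/-- a split of a surjection onto a projective module -/
private lemma exists_isCompl_ker {A E F : Type*} [CommRing A] [AddCommGroup E] [Module A E]
    [AddCommGroup F] [Module A F] [Module.Projective A F] (f : E →ₗ[A] F)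
    (hf : Function.Surjective f) :
    ∃ C : Submodule A E, IsCompl (LinearMap.ker f) C := by
  obtain ⟨g, hg⟩ := Module.projective_lifting_property f LinearMap.id hf
  exact ⟨LinearMap.range g, isCompl_ker_range f g hg⟩

/-- Let `φ : M' → M` and `ψ : M → M'` be maps of finite projective `A`-modules with
`φ ∘ ψ = 0` and `ψ ∘ φ = 0`. If `M →ψ M' →φ M` is exact and `coker φ` is finite
projective, then `im φ` is a direct summand of `M`, `im ψ` and `ker φ` are direct summands
of `M'`, `ker ψ` is a direct summand of `M`, and `coker ψ` is finite projective. -/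
theorem stmt_4 {A : Type*} [CommRing A] {M' M : Type*}
    [AddCommGroup M'] [Module A M'] [AddCommGroup M] [Module A M]
    [Module.Finite A M'] [Module.Projective A M']
    [Module.Finite A M] [Module.Projective A M]
    (φ : M' →ₗ[A] M) (ψ : M →ₗ[A] M')
    (hφψ : φ ∘ₗ ψ = 0) (hψφ : ψ ∘ₗ φ = 0)
    (hexact : Function.Exact ψ φ)
    (hcoker : Module.Finite A (M ⧸ LinearMap.range φ) ∧
      Module.Projective A (M ⧸ LinearMap.range φ)) :
    (∃ C : Submodule A M, IsCompl (LinearMap.range φ) C) ∧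
    (∃ C : Submodule A M', IsCompl (LinearMap.range ψ) C) ∧
    (∃ C : Submodule A M', IsCompl (LinearMap.ker φ) C) ∧
    (∃ C : Submodule A M, IsCompl (LinearMap.ker ψ) C) ∧
    Module.Finite A (M' ⧸ LinearMap.range ψ) ∧
      Module.Projective A (M' ⧸ LinearMap.range ψ) := by
  have hker : LinearMap.ker φ = LinearMap.range ψ :=
    (LinearMap.exact_iff.mp hexact)
  -- im φ is a direct summand of M
  haveI := hcoker.2
  obtain ⟨C₁, hC₁⟩ := exists_isCompl_ker (LinearMap.range φ).mkQ
    (Submodule.mkQ_surjective _)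
  rw [Submodule.ker_mkQ] at hC₁
  -- range φ is projective, so the surjection M' → range φ splits
  haveI : Module.Projective A (LinearMap.range φ) := proj_of_isCompl hC₁
  obtain ⟨C₂, hC₂⟩ := exists_isCompl_ker φ.rangeRestrict φ.surjective_rangeRestrict
  rw [LinearMap.ker_rangeRestrict] at hC₂
  have hC₂' : IsCompl (LinearMap.range ψ) C₂ := hker ▸ hC₂
  -- range ψ is projective, so the surjection M → range ψ splits
  haveI : Module.Projective A (LinearMap.range ψ) := proj_of_isCompl hC₂'
  obtain ⟨C₃, hC₃⟩ := exists_isCompl_ker ψ.rangeRestrict ψ.surjective_rangeRestrict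
  rw [LinearMap.ker_rangeRestrict] at hC₃
  refine ⟨⟨C₁, hC₁⟩, ⟨C₂, hC₂'⟩, ⟨C₂, hC₂⟩, ⟨C₃, hC₃⟩, inferInstance, ?_⟩
  haveI : Module.Projective A C₂ := proj_of_isCompl hC₂'.symm
  exact Module.Projective.of_equiv
    (Submodule.quotientEquivOfIsCompl (LinearMap.range ψ) C₂ hC₂').symm
end

section
/- Let W be a commutative ring and p, ξ ∈ W nonzerodivisors. Then W/ξW is p-torsion free if and only if W/pⁿW is ξ-torsion free for all natural numbers n ≥ 1. -/
lemma aux_inj {W : Type*} [CommRing W] (c b : W) :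
    Function.Injective (fun a : W ⧸ Ideal.span {b} => c • a) ↔
      ∀ x : W, b ∣ c * x → b ∣ x := by
  constructor
  · intro h x hx
    have key : ∀ z : W, c • (Ideal.Quotient.mk (Ideal.span {b}) z)
        = Ideal.Quotient.mk (Ideal.span {b}) (c * z) := fun z => rfl
    have h0 : (fun a : W ⧸ Ideal.span {b} => c • a) (Ideal.Quotient.mk _ x)
        = (fun a : W ⧸ Ideal.span {b} => c • a) 0 := by
      simp only [smul_zero]
      show c • (Ideal.Quotient.mk (Ideal.span {b}) x) = 0
      rw [key, Ideal.Quotient.eq_zero_iff_mem, Ideal.mem_span_singleton]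
      exact hx
    have := h h0
    rwa [Ideal.Quotient.eq_zero_iff_mem, Ideal.mem_span_singleton] at this
  · intro h a a' hab
    obtain ⟨x, rfl⟩ := Ideal.Quotient.mk_surjective a
    obtain ⟨y, rfl⟩ := Ideal.Quotient.mk_surjective a'
    have key : ∀ z : W, c • (Ideal.Quotient.mk (Ideal.span {b}) z)
        = Ideal.Quotient.mk (Ideal.span {b}) (c * z) := fun z => rfl
    simp only at hab
    rw [key, key] at hab
    rw [Ideal.Quotient.eq] at hab ⊢
    rw [Ideal.mem_span_singleton] at hab ⊢
    have := h (x - y) (by rwa [mul_sub])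
    exact this

/-- For nonzerodivisors `p, ξ` of a commutative ring `W`, the quotient `W/ξ` is
`p`-torsion free if and only if `W/pⁿ` is `ξ`-torsion free for all `n ≥ 1`. -/
theorem stmt_8 {W : Type*} [CommRing W] (p ξ : W)
    (hp : p ∈ nonZeroDivisors W) (hξ : ξ ∈ nonZeroDivisors W) :
    Function.Injective (fun a : W ⧸ Ideal.span {ξ} => p • a) ↔
      ∀ n : ℕ, 1 ≤ n →
        Function.Injective (fun a : W ⧸ Ideal.span {p ^ n} => ξ • a) := by
  have cancel : ∀ (c : W), c ∈ nonZeroDivisors W → ∀ a b : W, c * a = c * b → a = b := by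
    intro c hc a b hab
    have h0 : (a - b) * c = 0 := by
      rw [sub_mul, mul_comm a c, mul_comm b c, hab, sub_self]
    exact sub_eq_zero.mp ((mul_right_mem_nonZeroDivisors_eq_zero_iff hc).mp h0)
  rw [aux_inj]
  constructor
  · intro h n hn
    rw [aux_inj]
    induction n with
    | zero => omega
    | succ m ih =>
      rcases Nat.eq_zero_or_pos m with hm | hm
      · subst hm
        intro x hx
        simp only [zero_add, pow_one] at hx ⊢
        obtain ⟨b, hb⟩ := hx
        have hξb : ξ ∣ p * b := ⟨x, hb.symm⟩
        obtain ⟨c, hc⟩ := h b hξb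
        refine ⟨c, cancel ξ hξ _ _ ?_⟩
        rw [hb, hc]; ring
      · intro x hx
        have ihx := ih hm x (dvd_trans (pow_dvd_pow p (Nat.le_succ m)) hx)
        obtain ⟨c, hc⟩ := ihx
        obtain ⟨b, hb⟩ := hx
        -- ξ * (p^m * c) = p^(m+1) * b, cancel p^m : ξ * c = p * b
        have hpm : (p ^ m : W) ∈ nonZeroDivisors W := pow_mem hp m
        have h1 : ξ * c = p * b := by
          apply cancel (p ^ m) hpm
          have : p ^ m * (ξ * c) = ξ * x := by rw [hc]; ring
          rw [this, hb, pow_succ]; ring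
        obtain ⟨d, hd⟩ := h b ⟨c, h1.symm⟩
        have hcd : c = p * d := cancel ξ hξ _ _ (by rw [h1, hd]; ring)
        exact ⟨d, by rw [hc, hcd, pow_succ]; ring⟩
  · intro h x hx
    have h1 := (aux_inj ξ (p ^ 1)).mp (h 1 le_rfl)
    simp only [pow_one] at h1
    obtain ⟨b, hb⟩ := hx
    have : p ∣ ξ * b := ⟨x, hb.symm⟩
    obtain ⟨c, hc⟩ := h1 b this
    refine ⟨c, cancel p hp _ _ ?_⟩
    rw [hb, hc]; ring
end

section
/- Let A be a commutative ring, ξ ∈ A, n ∈ ℕ, and M an A-module fitting into a short exact sequence 0 → P₁ → P₀ → M → 0 with P₀, P₁ finite projective A-modules and pⁿP₀ ⊆ P₁ (for an element p ∈ A). Then the multiplication map induces an injection pⁿP₀/pⁿP₁ ↪ P₁/pⁿP₁; in particular, if A/pⁿA is ξ-torsion free and P₁/pⁿP₁ is ξ-torsion free, then M ≅ pⁿP₀/pⁿP₁ is ξ-torsion free. -/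
/-- Let `P₀` be a finite projective module over `A`, `p ∈ A` a nonzerodivisor, and
`P₁ ⊆ P₀` a finite projective submodule with `pⁿP₀ ⊆ P₁` (so `M = P₀/P₁` is killed by
`pⁿ`).  Then the image of `pⁿP₀` in `P₀/pⁿP₁` is contained in the image of `P₁` (the
inclusion `pⁿP₀/pⁿP₁ ↪ P₁/pⁿP₁`); and if `A/pⁿ` and `P₁/pⁿP₁` are `ξ`-torsion free, then
`M = P₀/P₁` is `ξ`-torsion free. -/
theorem stmt_9 {A : Type*} [CommRing A] (p ξ : A) (n : ℕ)
    (hp : p ∈ nonZeroDivisors A)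
    {P₀ : Type*} [AddCommGroup P₀] [Module A P₀]
    [Module.Finite A P₀] [Module.Projective A P₀]
    (P₁ : Submodule A P₀) [Module.Finite A P₁] [Module.Projective A P₁]
    (hsub : (Ideal.span {p ^ n} • ⊤ : Submodule A P₀) ≤ P₁) :
    Submodule.map (Ideal.span {p ^ n} • P₁).mkQ (Ideal.span {p ^ n} • ⊤) ≤
        Submodule.map (Ideal.span {p ^ n} • P₁).mkQ P₁ ∧
      ((Function.Injective (fun a : A ⧸ Ideal.span {p ^ n} => ξ • a)) →
       (Function.Injective
          (fun x : P₁ ⧸ (Ideal.span {p ^ n} • ⊤ : Submodule A P₁) => ξ • x)) →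
        Function.Injective (fun m : P₀ ⧸ P₁ => ξ • m)) := by
  constructor
  · exact Submodule.map_mono hsub
  · intro _ htf
    -- reduce to kernel triviality
    have key : ∀ x : P₀, ξ • x ∈ P₁ → x ∈ P₁ := by
      intro x hx
      have hz : p ^ n • x ∈ P₁ := hsub (Submodule.smul_mem_smul (Ideal.subset_span rfl) trivial)
      set z : P₁ := ⟨p ^ n • x, hz⟩
      set w : P₁ := ⟨ξ • x, hx⟩
      have hzw : ξ • z = p ^ n • w := by
        apply Subtype.ext
        show ξ • (p ^ n • x) = p ^ n • (ξ • x)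
        rw [smul_comm]
      have hmem : ξ • z ∈ (Ideal.span {p ^ n} • ⊤ : Submodule A P₁) := by
        rw [hzw]
        exact Submodule.smul_mem_smul (Ideal.subset_span rfl) trivial
      have h0 : (Submodule.Quotient.mk z : P₁ ⧸ (Ideal.span {p ^ n} • ⊤ : Submodule A P₁)) = 0 := by
        have := htf (a₁ := Submodule.Quotient.mk z) (a₂ := 0) ?_
        · exact this
        · show ξ • (Submodule.Quotient.mk z : P₁ ⧸ _) = ξ • (0 : P₁ ⧸ _)
          rw [smul_zero, ← Submodule.Quotient.mk_smul, Submodule.Quotient.mk_eq_zero]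
          exact hmem
      have hz2 : z ∈ (Ideal.span {p ^ n} • ⊤ : Submodule A P₁) :=
        (Submodule.Quotient.mk_eq_zero _).mp h0
      have hz2' : (z : P₀) ∈ Ideal.span {p ^ n} • P₁ :=
        (Submodule.mem_smul_top_iff _ _ _).mp hz2
      rw [Submodule.ideal_span_singleton_smul, ← SetLike.mem_coe,
        Submodule.coe_pointwise_smul] at hz2'
      obtain ⟨y, hyP, hy⟩ := hz2'
      have hcoe : p ^ n • y = p ^ n • x := hy
      have hq : p ^ n ∈ nonZeroDivisors A := pow_mem hp n
      obtain ⟨s, hs⟩ := Module.projective_def'.mp (inferInstance : Module.Projective A P₀)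
      have hsx : s (p ^ n • y) = s (p ^ n • x) := by rw [hcoe]
      rw [map_smul, map_smul] at hsx
      have hsy : s y = s x := by
        ext i
        have := congrArg (fun f : P₀ →₀ A => f i) hsx
        simp only [Finsupp.smul_apply, smul_eq_mul] at this
        exact (mul_cancel_left_mem_nonZeroDivisors hq).mp this
      have : y = x := by
        have hy' := LinearMap.congr_fun hs y
        have hx' := LinearMap.congr_fun hs x
        simp only [LinearMap.coe_comp, Function.comp_apply, LinearMap.id_apply] at hy' hx'
        rw [← hy', ← hx', hsy]
      exact this ▸ hyP
    intro a b hab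
    obtain ⟨x, rfl⟩ := Submodule.Quotient.mk_surjective _ a
    obtain ⟨y, rfl⟩ := Submodule.Quotient.mk_surjective _ b
    have : ξ • (x - y) ∈ P₁ := by
      rw [smul_sub, ← Submodule.Quotient.eq]
      exact hab
    have := key _ this
    exact (Submodule.Quotient.eq _).mpr this
end

section
/- Let A be a commutative ring and I an ideal contained in the Jacobson radical. Suppose M is a finite projective A-module, Q' a finite projective A-module, and there are A-linear maps u : Q' → M and v : M → Q' such that v∘u is an isomorphism modulo I. Then v∘u is an isomorphism, u is injective, and the image u(Q') is a direct summand of M. -/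
/-- Any linear map sends `I • ⊤` into `I • ⊤`. -/
lemma smul_top_le_comap {A M N : Type*} [CommRing A]
    [AddCommGroup M] [Module A M] [AddCommGroup N] [Module A N]
    (I : Ideal A) (f : M →ₗ[A] N) :
    I • (⊤ : Submodule A M) ≤ (I • (⊤ : Submodule A N)).comap f := by
  rw [← Submodule.map_le_iff_le_comap, Submodule.map_smul'']
  exact Submodule.smul_mono le_rfl (Submodule.map_le_iff_le_comap.mpr le_top)

/-- Let `I` be an ideal contained in the Jacobson radical of `A`, `M`, `Q'` finite
projective `A`-modules, and `u : Q' → M`, `v : M → Q'` such that `v ∘ u` is an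
isomorphism modulo `I`.  Then `v ∘ u` is an isomorphism, `u` is injective, and the image
of `u` is a direct summand of `M`. -/
theorem stmt_13 {A : Type*} [CommRing A] (I : Ideal A)
    (hI : I ≤ (⊥ : Ideal A).jacobson)
    {M Q' : Type*} [AddCommGroup M] [Module A M] [AddCommGroup Q'] [Module A Q']
    [Module.Finite A M] [Module.Projective A M]
    [Module.Finite A Q'] [Module.Projective A Q']
    (u : Q' →ₗ[A] M) (v : M →ₗ[A] Q')
    (h : Function.Bijective
      (Submodule.mapQ (I • ⊤) (I • ⊤) (v ∘ₗ u) (smul_top_le_comap I (v ∘ₗ u)))) :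
    Function.Bijective (v ∘ₗ u) ∧ Function.Injective u ∧
      ∃ C : Submodule A M, IsCompl (LinearMap.range u) C := by
  -- Step 1: `v ∘ u` is surjective, by Nakayama.
  have hle : (⊤ : Submodule A Q') ≤ LinearMap.range (v ∘ₗ u) ⊔ I • ⊤ := by
    intro x _
    obtain ⟨y, hy⟩ := h.2 (Submodule.Quotient.mk x)
    obtain ⟨z, rfl⟩ := Submodule.Quotient.mk_surjective _ y
    rw [Submodule.mapQ_apply, Submodule.Quotient.eq] at hy
    have : x = (v ∘ₗ u) z + (x - (v ∘ₗ u) z) := by abel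
    rw [this]
    exact Submodule.add_mem_sup (LinearMap.mem_range_self _ z) (by simpa using neg_mem hy)
  have hsurj : Function.Surjective (v ∘ₗ u) := by
    rw [← LinearMap.range_eq_top, eq_top_iff]
    refine Submodule.le_of_le_smul_of_le_jacobson_bot (Module.Finite.fg_top) hI ?_
    exact hle
  have hbij : Function.Bijective (v ∘ₗ u) :=
    OrzechProperty.bijective_of_surjective_endomorphism _ hsurj
  refine ⟨hbij, ?_, ?_⟩
  · intro a b hab
    exact hbij.1 (by simp [LinearMap.comp_apply, hab])
  · -- splitting: w ∘ u = id
    set e := LinearEquiv.ofBijective _ hbij with he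
    set w : M →ₗ[A] Q' := (e.symm : Q' →ₗ[A] Q') ∘ₗ v with hw
    have hwu : ∀ q : Q', w (u q) = q := by
      intro q
      have : v (u q) = e q := rfl
      simp [hw, this]
    refine ⟨LinearMap.ker w, ?_, ?_⟩
    · rw [disjoint_iff_inf_le]
      rintro x ⟨⟨q, rfl⟩, hx2⟩
      have : w (u q) = 0 := hx2
      rw [hwu] at this
      simp [this]
    · rw [codisjoint_iff_le_sup]
      intro m _
      have hm : m = u (w m) + (m - u (w m)) := by abel
      rw [hm]
      refine Submodule.add_mem_sup (LinearMap.mem_range_self _ _) ?_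
      simp [LinearMap.mem_ker, hwu]
end

section
/- Let A be a commutative ring and I an ideal contained in the Jacobson radical. Let M be a finite projective A-module and L, P ⊆ M submodules which are finite projective such that the natural map L/IL ⊕ P/IP → M/IM is an isomorphism. Then L ⊕ P → M is an isomorphism. -/
/-- Let `I` be an ideal contained in the Jacobson radical of `A`, `M` a finite projective
`A`-module and `L, P` finite projective modules mapping to `M` such that the induced map
`L/IL ⊕ P/IP → M/IM` is an isomorphism.  Then `L ⊕ P → M` is an isomorphism. -/
theorem stmt_14 {A : Type*} [CommRing A] (I : Ideal A)
    (hI : I ≤ (⊥ : Ideal A).jacobson)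
    {M L P : Type*} [AddCommGroup M] [Module A M]
    [AddCommGroup L] [Module A L] [AddCommGroup P] [Module A P]
    [Module.Finite A M] [Module.Projective A M]
    [Module.Finite A L] [Module.Projective A L]
    [Module.Finite A P] [Module.Projective A P]
    (ιL : L →ₗ[A] M) (ιP : P →ₗ[A] M)
    (h : Function.Bijective
      (Submodule.mapQ (I • ⊤) (I • ⊤) (LinearMap.coprod ιL ιP)
        (smul_top_le_comap I (LinearMap.coprod ιL ιP)))) :
    Function.Bijective (LinearMap.coprod ιL ιP) := by
  set f := LinearMap.coprod ιL ιP with hf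
  -- surjectivity
  have hcomp : (Submodule.mapQ (I • ⊤) (I • ⊤) f (smul_top_le_comap I f)).comp
      (Submodule.mkQ (I • ⊤)) = (Submodule.mkQ (I • ⊤)).comp f := by
    ext x <;> simp [Submodule.mapQ_apply]
  have hsurj : Function.Surjective f := by
    have h1 : (⊤ : Submodule A M) ≤ LinearMap.range f ⊔ I • ⊤ := by
      intro x _
      obtain ⟨y, hy⟩ := h.surjective (Submodule.mkQ (I • ⊤) x)
      obtain ⟨z, rfl⟩ := Submodule.mkQ_surjective _ y
      have h2 : Submodule.mkQ (I • ⊤) (f z) = Submodule.mkQ (I • ⊤) x :=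
        (LinearMap.congr_fun hcomp z).symm.trans hy
      have hx : x - f z ∈ (I • ⊤ : Submodule A M) := by
        have := (Submodule.Quotient.eq (I • (⊤ : Submodule A M))).mp h2
        simpa using Submodule.neg_mem _ this
      have := Submodule.add_mem_sup (LinearMap.mem_range_self f z) hx
      simpa using this
    have : (⊤ : Submodule A M) ≤ LinearMap.range f :=
      Submodule.le_of_le_smul_of_le_jacobson_bot Module.Finite.fg_top hI h1
    rw [← LinearMap.range_eq_top]
    exact top_le_iff.mp this
  -- section
  obtain ⟨s, hs⟩ := Module.projective_lifting_property f LinearMap.id hsurj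
  set π : (L × P) →ₗ[A] (L × P) := LinearMap.id - s.comp f with hπ
  have hrange : LinearMap.range π = LinearMap.ker f := by
    apply le_antisymm
    · rintro _ ⟨x, rfl⟩
      have : f (s (f x)) = f x := LinearMap.congr_fun hs (f x)
      simp only [π, LinearMap.mem_ker, LinearMap.sub_apply, LinearMap.id_apply,
        LinearMap.comp_apply, map_sub, this, sub_self]
    · intro x hx
      refine ⟨x, ?_⟩
      simp [π, LinearMap.mem_ker.mp hx]
  have hker_le : LinearMap.ker f ≤ I • (⊤ : Submodule A (L × P)) := by
    intro x hx
    have : Submodule.mkQ (I • ⊤) x ∈ LinearMap.ker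
        (Submodule.mapQ (I • ⊤) (I • ⊤) f (smul_top_le_comap I f)) := by
      simp [Submodule.mapQ_apply, LinearMap.mem_ker.mp hx]
    have h0 : Submodule.mkQ (I • ⊤) x = 0 :=
      h.injective (by simpa using LinearMap.mem_ker.mp this)
    simpa [Submodule.Quotient.mk_eq_zero] using h0
  have hkerfg : (LinearMap.ker f).FG := by
    rw [← hrange, LinearMap.range_eq_map]
    exact Submodule.FG.map π Module.Finite.fg_top
  have hsmul : LinearMap.ker f ≤ I • (LinearMap.ker f) := by
    have : LinearMap.ker f = Submodule.map π (LinearMap.ker f) := by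
      apply le_antisymm
      · intro x hx
        exact ⟨x, hx, by simp [π, LinearMap.mem_ker.mp hx]⟩
      · calc Submodule.map π (LinearMap.ker f) ≤ Submodule.map π ⊤ :=
              Submodule.map_mono le_top
          _ = LinearMap.range π := (LinearMap.range_eq_map π).symm
          _ = LinearMap.ker f := hrange
    calc LinearMap.ker f = Submodule.map π (LinearMap.ker f) := this
      _ ≤ Submodule.map π (I • ⊤) := Submodule.map_mono hker_le
      _ = I • Submodule.map π ⊤ := Submodule.map_smul'' _ _ _
      _ = I • LinearMap.ker f := by rw [Submodule.map_top, hrange]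
  have : LinearMap.ker f = ⊥ :=
    Submodule.eq_bot_of_le_smul_of_le_jacobson_bot I _ hkerfg hsmul hI
  exact ⟨LinearMap.ker_eq_bot.mp this, hsurj⟩
end
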